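/- A nonzero real binary quartic Q has a repeated linear factor over ℂ (i.e., some nonzero complex linear form divides Q, viewed as a complex quartic, with multiplicity at least 2) if and only if Δ(Q) = 0, where Δ(Q) := 4I(Q)³ − J(Q)². -/

import Mathlib

section

open MvPolynomial

/-- The real binary quartic `aX⁴ + bX³Y + cX²Y² + dXY³ + eY⁴`. -/
noncomputable def binQuartic (a b c d e : ℝ) : MvPolynomial (Fin 2) ℝ :=
  C a * X 0 ^ 4 + C b * X 0 ^ 3 * X 1 + C c * X 0 ^ 2 * X 1 ^ 2 +
    C d * X 0 * X 1 ^ 3 + C e * X 1 ^ 4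

/-- The real binary quartic viewed as a complex binary quartic. -/
noncomputable def binQuarticC (a b c d e : ℝ) : MvPolynomial (Fin 2) ℂ :=
  C (a : ℂ) * X 0 ^ 4 + C (b : ℂ) * X 0 ^ 3 * X 1 + C (c : ℂ) * X 0 ^ 2 * X 1 ^ 2 +
    C (d : ℂ) * X 0 * X 1 ^ 3 + C (e : ℂ) * X 1 ^ 4

/-- The fundamental invariant `I = 12ae − 3bd + c²` of a real binary quartic. -/
def Iinv (a b c d e : ℝ) : ℝ := 12 * a * e - 3 * b * d + c ^ 2

/-- The fundamental invariant `J = 72aec − 27ad² − 27b²e + 9bcd − 2c³`. -/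
def Jinv (a b c d e : ℝ) : ℝ :=
  72 * a * e * c - 27 * a * d ^ 2 - 27 * b ^ 2 * e + 9 * b * c * d - 2 * c ^ 3

end

/-! ### Auxiliary material on single-variable polynomials -/

namespace BQaux

open Polynomial

lemma multiset_card_four {s : Multiset ℂ} (h : Multiset.card s = 4) :
    ∃ r1 r2 r3 r4 : ℂ, s = {r1, r2, r3, r4} := by
  obtain ⟨r1, hr1⟩ := Multiset.card_pos_iff_exists_mem.mp (by rw [h]; norm_num)
  obtain ⟨t, rfl⟩ := Multiset.exists_cons_of_mem hr1
  simp only [Multiset.card_cons] at h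
  obtain ⟨r2, r3, r4, rfl⟩ := Multiset.card_eq_three.mp (show Multiset.card t = 3 by omega)
  exact ⟨r1, r2, r3, r4, rfl⟩

/-- The dehomogenization (at `Y = 1`) of a binary quartic, as a complex polynomial. -/
noncomputable def quarPoly (a b c d e : ℝ) : Polynomial ℂ :=
  C (a : ℂ) * X ^ 4 + C (b : ℂ) * X ^ 3 + C (c : ℂ) * X ^ 2 + C (d : ℂ) * X + C (e : ℂ)

/-- The dehomogenization (at `Y = 1`) of a binary quartic with `a = 0`. -/
noncomputable def cubPoly (b c d e : ℝ) : Polynomial ℂ :=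
  C (b : ℂ) * X ^ 3 + C (c : ℂ) * X ^ 2 + C (d : ℂ) * X + C (e : ℂ)

lemma quarPoly_ne_zero {a : ℝ} (ha : (a : ℂ) ≠ 0) (b c d e : ℝ) :
    quarPoly a b c d e ≠ 0 := by
  have h4 : (quarPoly a b c d e).coeff 4 = (a : ℂ) := by
    simp [quarPoly, coeff_add, coeff_C_mul, coeff_X_pow, coeff_C, coeff_X]
  intro h
  rw [h] at h4
  exact ha (by simpa using h4.symm)

lemma cubPoly_ne_zero {b : ℝ} (hb : (b : ℂ) ≠ 0) (c d e : ℝ) :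
    cubPoly b c d e ≠ 0 := by
  have h3 : (cubPoly b c d e).coeff 3 = (b : ℂ) := by
    simp [cubPoly, coeff_add, coeff_C_mul, coeff_X_pow, coeff_C, coeff_X]
  intro h
  rw [h] at h3
  exact hb (by simpa using h3.symm)

lemma quarPoly_zero (b c d e : ℝ) : quarPoly 0 b c d e = cubPoly b c d e := by
  rw [quarPoly, cubPoly]; simp

lemma quar_decomp (a b c d e : ℝ) (ha : (a : ℂ) ≠ 0) :
    ∃ r1 r2 r3 r4 : ℂ, (quarPoly a b c d e).roots = {r1, r2, r3, r4} ∧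
      (b : ℂ) = -((a : ℂ) * (r1 + r2 + r3 + r4)) ∧
      (c : ℂ) = (a : ℂ) * (r1*r2 + r1*r3 + r1*r4 + r2*r3 + r2*r4 + r3*r4) ∧
      (d : ℂ) = -((a : ℂ) * (r1*r2*r3 + r1*r2*r4 + r1*r3*r4 + r2*r3*r4)) ∧
      (e : ℂ) = (a : ℂ) * (r1*r2*r3*r4) := by
  set f := quarPoly a b c d e with hf
  have hdeg : f.natDegree = 4 := by
    rw [hf, quarPoly]; compute_degree!
    intro h; exact ha (by rw [h]; simp)
  have hne : f ≠ 0 := quarPoly_ne_zero ha b c d e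
  have hlead : f.leadingCoeff = (a : ℂ) := by
    rw [Polynomial.leadingCoeff, hdeg, hf, quarPoly]
    simp [coeff_add, coeff_C_mul, coeff_X_pow, coeff_C, coeff_X]
  have hcard : Multiset.card f.roots = 4 := by
    rw [← hdeg]
    exact Polynomial.splits_iff_card_roots.mp (IsAlgClosed.splits f)
  obtain ⟨r1, r2, r3, r4, hroots⟩ := multiset_card_four hcard
  have hprod : C (a : ℂ) * ((X - C r1) * (X - C r2) * (X - C r3) * (X - C r4)) = f := by
    have := Polynomial.C_leadingCoeff_mul_prod_multiset_X_sub_C (p := f) (by rw [hcard, hdeg])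
    rw [hlead, hroots] at this
    simpa [Multiset.map_cons, Multiset.prod_cons, mul_assoc] using this
  rw [hf, quarPoly] at hprod
  have hexp : C (Complex.ofReal a) * ((X - C r1) * (X - C r2) * (X - C r3) * (X - C r4))
      = C (a:ℂ) * X^4 + C (-((a:ℂ)*(r1+r2+r3+r4))) * X^3
        + C ((a:ℂ)*(r1*r2+r1*r3+r1*r4+r2*r3+r2*r4+r3*r4)) * X^2
        + C (-((a:ℂ)*(r1*r2*r3+r1*r2*r4+r1*r3*r4+r2*r3*r4))) * X
        + C ((a:ℂ)*(r1*r2*r3*r4)) := by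
    simp only [map_mul, map_add, map_neg]; ring
  rw [hexp] at hprod
  have h3 := congrArg (fun g => Polynomial.coeff g 3) hprod
  have h2 := congrArg (fun g => Polynomial.coeff g 2) hprod
  have h1 := congrArg (fun g => Polynomial.coeff g 1) hprod
  have h0 := congrArg (fun g => Polynomial.coeff g 0) hprod
  simp only [Polynomial.coeff_add, Polynomial.coeff_C_mul, Polynomial.coeff_X_pow,
    Polynomial.coeff_C, Polynomial.coeff_X] at h3 h2 h1 h0
  norm_num at h3 h2 h1 h0
  exact ⟨r1, r2, r3, r4, hroots, h3.symm, h2.symm, h1.symm, h0.symm⟩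

lemma cub_decomp (b c d e : ℝ) (hb : (b : ℂ) ≠ 0) :
    ∃ r1 r2 r3 : ℂ, (cubPoly b c d e).roots = {r1, r2, r3} ∧
      (c : ℂ) = -((b : ℂ) * (r1 + r2 + r3)) ∧
      (d : ℂ) = (b : ℂ) * (r1*r2 + r1*r3 + r2*r3) ∧
      (e : ℂ) = -((b : ℂ) * (r1*r2*r3)) := by
  set f := cubPoly b c d e with hf
  have hdeg : f.natDegree = 3 := by
    rw [hf, cubPoly]; compute_degree!
    intro h; exact hb (by rw [h]; simp)
  have hne : f ≠ 0 := cubPoly_ne_zero hb c d e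
  have hlead : f.leadingCoeff = (b : ℂ) := by
    rw [Polynomial.leadingCoeff, hdeg, hf, cubPoly]
    simp [coeff_add, coeff_C_mul, coeff_X_pow, coeff_C, coeff_X]
  have hcard : Multiset.card f.roots = 3 := by
    rw [← hdeg]
    exact Polynomial.splits_iff_card_roots.mp (IsAlgClosed.splits f)
  obtain ⟨r1, r2, r3, hroots⟩ := Multiset.card_eq_three.mp hcard
  have hprod : C (b : ℂ) * ((X - C r1) * (X - C r2) * (X - C r3)) = f := by
    have := Polynomial.C_leadingCoeff_mul_prod_multiset_X_sub_C (p := f) (by rw [hcard, hdeg])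
    rw [hlead, hroots] at this
    simpa [Multiset.map_cons, Multiset.prod_cons, mul_assoc] using this
  rw [hf, cubPoly] at hprod
  have hexp : C (Complex.ofReal b) * ((X - C r1) * (X - C r2) * (X - C r3))
      = C (b:ℂ) * X^3 + C (-((b:ℂ)*(r1+r2+r3))) * X^2
        + C ((b:ℂ)*(r1*r2+r1*r3+r2*r3)) * X
        + C (-((b:ℂ)*(r1*r2*r3))) := by
    simp only [map_mul, map_add, map_neg]; ring
  rw [hexp] at hprod
  have h2 := congrArg (fun g => Polynomial.coeff g 2) hprod
  have h1 := congrArg (fun g => Polynomial.coeff g 1) hprod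
  have h0 := congrArg (fun g => Polynomial.coeff g 0) hprod
  simp only [Polynomial.coeff_add, Polynomial.coeff_C_mul, Polynomial.coeff_X_pow,
    Polynomial.coeff_C, Polynomial.coeff_X] at h2 h1 h0
  norm_num at h2 h1 h0
  exact ⟨r1, r2, r3, hroots, h2.symm, h1.symm, h0.symm⟩

set_option maxHeartbeats 1000000 in
lemma pair_eq_of_sq_dvd4 (f : Polynomial ℂ) (hne : f ≠ 0) (p q r1 r2 r3 r4 : ℂ)
    (hp : p ≠ 0) (hroots : f.roots = {r1, r2, r3, r4})
    (hdvd : (C p * X + C q) ^ 2 ∣ f) :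
    (r1-r2)*(r1-r3)*(r1-r4)*(r2-r3)*(r2-r4)*(r3-r4) = 0 := by
  set r : ℂ := -q/p with hr
  have hpq : p * (-q/p) = -q := by field_simp
  have hL : C p * X + C q = C p * (X - C r) := by
    rw [hr, mul_sub, ← C_mul, hpq, map_neg, sub_neg_eq_add]
  rw [hL, mul_pow, mul_comm] at hdvd
  have hu : IsUnit (C p ^ 2) := (isUnit_C.mpr hp.isUnit).pow 2
  have hdvd2 : (X - C r) ^ 2 ∣ f := (hu.mul_right_dvd).mp hdvd
  have hcount : 2 ≤ f.roots.count r := by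
    rw [count_roots]
    exact (le_rootMultiplicity_iff hne).mpr hdvd2
  rw [hroots] at hcount
  simp only [show ({r1, r2, r3, r4} : Multiset ℂ) = r1 ::ₘ r2 ::ₘ r3 ::ₘ r4 ::ₘ 0 from rfl,
    Multiset.count_cons, Multiset.count_zero] at hcount
  have hpair : r1 = r2 ∨ r1 = r3 ∨ r1 = r4 ∨ r2 = r3 ∨ r2 = r4 ∨ r3 = r4 := by
    split_ifs at hcount <;> first | (exfalso; omega) | grind
  rcases hpair with h|h|h|h|h|h <;> rw [h] <;> ring

set_option maxHeartbeats 1000000 in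
lemma pair_eq_of_sq_dvd3 (f : Polynomial ℂ) (hne : f ≠ 0) (p q r1 r2 r3 : ℂ)
    (hp : p ≠ 0) (hroots : f.roots = {r1, r2, r3})
    (hdvd : (C p * X + C q) ^ 2 ∣ f) :
    (r1-r2)*(r1-r3)*(r2-r3) = 0 := by
  set r : ℂ := -q/p with hr
  have hpq : p * (-q/p) = -q := by field_simp
  have hL : C p * X + C q = C p * (X - C r) := by
    rw [hr, mul_sub, ← C_mul, hpq, map_neg, sub_neg_eq_add]
  rw [hL, mul_pow, mul_comm] at hdvd
  have hu : IsUnit (C p ^ 2) := (isUnit_C.mpr hp.isUnit).pow 2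
  have hdvd2 : (X - C r) ^ 2 ∣ f := (hu.mul_right_dvd).mp hdvd
  have hcount : 2 ≤ f.roots.count r := by
    rw [count_roots]
    exact (le_rootMultiplicity_iff hne).mpr hdvd2
  rw [hroots] at hcount
  simp only [show ({r1, r2, r3} : Multiset ℂ) = r1 ::ₘ r2 ::ₘ r3 ::ₘ 0 from rfl,
    Multiset.count_cons, Multiset.count_zero] at hcount
  have hpair : r1 = r2 ∨ r1 = r3 ∨ r2 = r3 := by
    split_ifs at hcount <;> first | (exfalso; omega) | grind
  rcases hpair with h|h|h <;> rw [h] <;> ring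

/-- Substitution `X₀ ↦ X`, `X₁ ↦ 1`. -/
noncomputable def ψ : MvPolynomial (Fin 2) ℂ →ₐ[ℂ] Polynomial ℂ :=
  MvPolynomial.aeval (fun i : Fin 2 => if i = 0 then Polynomial.X else 1)

/-- Substitution `X₀ ↦ 1`, `X₁ ↦ X`. -/
noncomputable def ω : MvPolynomial (Fin 2) ℂ →ₐ[ℂ] Polynomial ℂ :=
  MvPolynomial.aeval (fun i : Fin 2 => if i = 0 then 1 else Polynomial.X)

lemma psi_lin (p q : ℂ) :
    ψ (MvPolynomial.C p * MvPolynomial.X 0 + MvPolynomial.C q * MvPolynomial.X 1)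
      = Polynomial.C p * Polynomial.X + Polynomial.C q := by
  simp [ψ, Polynomial.algebraMap_eq]

lemma omega_lin (p q : ℂ) :
    ω (MvPolynomial.C p * MvPolynomial.X 0 + MvPolynomial.C q * MvPolynomial.X 1)
      = Polynomial.C p + Polynomial.C q * Polynomial.X := by
  simp [ω, Polynomial.algebraMap_eq]

end BQaux

open MvPolynomial

namespace BQaux

lemma psi_binQuarticC (a b c d e : ℝ) :
    ψ (binQuarticC a b c d e) = quarPoly a b c d e := by
  simp [binQuarticC, ψ, quarPoly, Polynomial.algebraMap_eq]

lemma omega_binQuarticC (a b c d e : ℝ) :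
    ω (binQuarticC a b c d e) = Polynomial.C (a:ℂ) + Polynomial.C (b:ℂ) * Polynomial.X
      + Polynomial.C (c:ℂ) * Polynomial.X ^ 2 + Polynomial.C (d:ℂ) * Polynomial.X ^ 3
      + Polynomial.C (e:ℂ) * Polynomial.X ^ 4 := by
  simp [binQuarticC, ω, Polynomial.algebraMap_eq]

/-- Helper producing the repeated-factor witness from a coincidence of two roots
(quartic case). -/
lemma exists_of_eq4 {Q : MvPolynomial (Fin 2) ℂ} {a s t u v : ℂ}
    (hQ : Q = C a * ((X 0 - C s * X 1) * (X 0 - C t * X 1)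
      * (X 0 - C u * X 1) * (X 0 - C v * X 1)))
    (h : s = t) :
    ∃ p q : ℂ, ¬(p = 0 ∧ q = 0) ∧ (C p * X 0 + C q * X 1) ^ 2 ∣ Q := by
  refine ⟨1, -s, by simp, C a * ((X 0 - C u * X 1) * (X 0 - C v * X 1)), ?_⟩
  rw [hQ, ← h]
  simp only [map_one, map_neg]
  ring

/-- Helper producing the repeated-factor witness from a coincidence of two roots
(cubic case, with an extra factor `X₁`). -/
lemma exists_of_eq3 {Q : MvPolynomial (Fin 2) ℂ} {a s t u : ℂ}
    (hQ : Q = C a * X 1 * ((X 0 - C s * X 1) * (X 0 - C t * X 1) * (X 0 - C u * X 1)))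
    (h : s = t) :
    ∃ p q : ℂ, ¬(p = 0 ∧ q = 0) ∧ (C p * X 0 + C q * X 1) ^ 2 ∣ Q := by
  refine ⟨1, -s, by simp, C a * X 1 * (X 0 - C u * X 1), ?_⟩
  rw [hQ, ← h]
  simp only [map_one, map_neg]
  ring

end BQaux

/-- A nonzero real binary quartic has a repeated linear factor over `ℂ` if and
only if `Δ = 4I³ − J²` vanishes. -/
theorem repeated_factor_iff_discriminant_zero
    (a b c d e : ℝ) (hQ : binQuartic a b c d e ≠ 0) :
    (∃ p q : ℂ, ¬(p = 0 ∧ q = 0) ∧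
      (C p * X 0 + C q * X 1) ^ 2 ∣ binQuarticC a b c d e) ↔
    4 * Iinv a b c d e ^ 3 - Jinv a b c d e ^ 2 = 0 := by
  classical
  by_cases ha : a = 0
  · subst ha
    by_cases hb : b = 0
    · subst hb
      constructor
      · intro _
        simp only [Iinv, Jinv]; ring
      · intro _
        refine ⟨0, 1, by simp, C (c:ℂ) * X 0 ^ 2 + C (d:ℂ) * X 0 * X 1 + C (e:ℂ) * X 1 ^ 2, ?_⟩
        rw [binQuarticC]
        simp only [map_zero, map_one, Complex.ofReal_zero]
        ring
    · -- cubic case : a = 0, b ≠ 0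
      have hbC : (b : ℂ) ≠ 0 := by exact_mod_cast hb
      obtain ⟨r1, r2, r3, hroots, hc, hd, he⟩ := BQaux.cub_decomp b c d e hbC
      have hQfact : binQuarticC 0 b c d e = C (b:ℂ) * X 1 * ((X 0 - C r1 * X 1)
          * (X 0 - C r2 * X 1) * (X 0 - C r3 * X 1)) := by
        rw [binQuarticC, hc, hd, he]
        simp only [map_mul, map_add, map_neg, Complex.ofReal_zero, map_zero]
        ring
      have hdisc : ((4 * Iinv 0 b c d e ^ 3 - Jinv 0 b c d e ^ 2 : ℝ) : ℂ)
          = 27 * (b:ℂ)^6 * ((r1-r2)*(r1-r3)*(r2-r3))^2 := by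
        simp only [Iinv, Jinv]
        push_cast
        rw [hc, hd, he]
        ring
      constructor
      · rintro ⟨p, q, hpq0, hdvd⟩
        by_cases hp : p = 0
        · exfalso
          subst hp
          have hq : q ≠ 0 := fun h => hpq0 ⟨rfl, h⟩
          have hdvd' := map_dvd BQaux.ω hdvd
          rw [map_pow, BQaux.omega_lin, BQaux.omega_binQuarticC] at hdvd'
          simp only [map_zero, zero_add, Complex.ofReal_zero] at hdvd'
          have hXdvd : Polynomial.X ^ 2 ∣ (Polynomial.C (b:ℂ) * Polynomial.X
              + Polynomial.C (c:ℂ) * Polynomial.X ^ 2 + Polynomial.C (d:ℂ) * Polynomial.X ^ 3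
              + Polynomial.C (e:ℂ) * Polynomial.X ^ 4) := by
            have h1 : (Polynomial.C q * Polynomial.X) ^ 2
                = Polynomial.X ^ 2 * Polynomial.C (q ^ 2) := by
              rw [mul_pow, ← map_pow]; ring
            rw [h1] at hdvd'
            have hu : IsUnit (Polynomial.C (q ^ 2)) :=
              Polynomial.isUnit_C.mpr (pow_ne_zero 2 hq).isUnit
            exact (hu.mul_right_dvd).mp hdvd'
          obtain ⟨R, hR⟩ := hXdvd
          have hco := congrArg (fun g => Polynomial.coeff g 1) hR
          simp only [Polynomial.coeff_add, Polynomial.coeff_C_mul, Polynomial.coeff_X_pow,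
            Polynomial.coeff_X, Polynomial.coeff_X_pow_mul'] at hco
          norm_num at hco
          exact hbC (by exact_mod_cast hco)
        · have hdvd' := map_dvd BQaux.ψ hdvd
          rw [map_pow, BQaux.psi_lin, BQaux.psi_binQuarticC, BQaux.quarPoly_zero] at hdvd'
          have hP := BQaux.pair_eq_of_sq_dvd3 _ (BQaux.cubPoly_ne_zero hbC c d e)
            p q r1 r2 r3 hp hroots hdvd'
          have hz : ((4 * Iinv 0 b c d e ^ 3 - Jinv 0 b c d e ^ 2 : ℝ) : ℂ) = 0 := by
            rw [hdisc, hP]; ring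
          exact_mod_cast hz
      · intro h0
        have hcast : ((4 * Iinv 0 b c d e ^ 3 - Jinv 0 b c d e ^ 2 : ℝ) : ℂ) = 0 := by
          exact_mod_cast h0
        rw [hdisc] at hcast
        have h27 : (27:ℂ) * (b:ℂ)^6 ≠ 0 := by
          exact mul_ne_zero (by norm_num) (pow_ne_zero 6 hbC)
        have hP : (r1-r2)*(r1-r3)*(r2-r3) = 0 := by
          rcases mul_eq_zero.mp hcast with h | h
          · exact absurd h h27
          · exact pow_eq_zero_iff (n := 2) (by norm_num) |>.mp h
        have h6 : r1 = r2 ∨ r1 = r3 ∨ r2 = r3 := by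
          simpa only [mul_eq_zero, sub_eq_zero, or_assoc] using hP
        rcases h6 with h | h | h
        · exact BQaux.exists_of_eq3 hQfact h
        · exact BQaux.exists_of_eq3 (s := r1) (t := r3) (u := r2) (by rw [hQfact]; ring) h
        · exact BQaux.exists_of_eq3 (s := r2) (t := r3) (u := r1) (by rw [hQfact]; ring) h
  · -- quartic case : a ≠ 0
    have haC : (a : ℂ) ≠ 0 := by exact_mod_cast ha
    obtain ⟨r1, r2, r3, r4, hroots, hb, hc, hd, he⟩ := BQaux.quar_decomp a b c d e haC
    have hQfact : binQuarticC a b c d e = C (a:ℂ) * ((X 0 - C r1 * X 1) * (X 0 - C r2 * X 1)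
        * (X 0 - C r3 * X 1) * (X 0 - C r4 * X 1)) := by
      rw [binQuarticC, hb, hc, hd, he]
      simp only [map_mul, map_add, map_neg]
      ring
    have hdisc : ((4 * Iinv a b c d e ^ 3 - Jinv a b c d e ^ 2 : ℝ) : ℂ)
        = 27 * (a:ℂ)^6 * ((r1-r2)*(r1-r3)*(r1-r4)*(r2-r3)*(r2-r4)*(r3-r4))^2 := by
      simp only [Iinv, Jinv]
      push_cast
      rw [hb, hc, hd, he]
      ring
    constructor
    · rintro ⟨p, q, hpq0, hdvd⟩
      by_cases hp : p = 0
      · exfalso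
        subst hp
        obtain ⟨R, hR⟩ := hdvd
        have hev := congrArg (MvPolynomial.eval (fun i : Fin 2 => if i = 0 then (1:ℂ) else 0)) hR
        simp [binQuarticC] at hev
        exact haC (by exact_mod_cast hev)
      · have hdvd' := map_dvd BQaux.ψ hdvd
        rw [map_pow, BQaux.psi_lin, BQaux.psi_binQuarticC] at hdvd'
        have hP := BQaux.pair_eq_of_sq_dvd4 _ (BQaux.quarPoly_ne_zero haC b c d e)
          p q r1 r2 r3 r4 hp hroots hdvd'
        have hz : ((4 * Iinv a b c d e ^ 3 - Jinv a b c d e ^ 2 : ℝ) : ℂ) = 0 := by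
          rw [hdisc, hP]; ring
        exact_mod_cast hz
    · intro h0
      have hcast : ((4 * Iinv a b c d e ^ 3 - Jinv a b c d e ^ 2 : ℝ) : ℂ) = 0 := by
        exact_mod_cast h0
      rw [hdisc] at hcast
      have h27 : (27:ℂ) * (a:ℂ)^6 ≠ 0 := by
        exact mul_ne_zero (by norm_num) (pow_ne_zero 6 haC)
      have hP : (r1-r2)*(r1-r3)*(r1-r4)*(r2-r3)*(r2-r4)*(r3-r4) = 0 := by
        rcases mul_eq_zero.mp hcast with h | h
        · exact absurd h h27
        · exact pow_eq_zero_iff (n := 2) (by norm_num) |>.mp h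
      have h6 : r1 = r2 ∨ r1 = r3 ∨ r1 = r4 ∨ r2 = r3 ∨ r2 = r4 ∨ r3 = r4 := by
        simpa only [mul_eq_zero, sub_eq_zero, or_assoc] using hP
      rcases h6 with h | h | h | h | h | h
      · exact BQaux.exists_of_eq4 hQfact h
      · exact BQaux.exists_of_eq4 (s := r1) (t := r3) (u := r2) (v := r4)
          (by rw [hQfact]; ring) h
      · exact BQaux.exists_of_eq4 (s := r1) (t := r4) (u := r2) (v := r3)
          (by rw [hQfact]; ring) h
      · exact BQaux.exists_of_eq4 (s := r2) (t := r3) (u := r1) (v := r4)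
          (by rw [hQfact]; ring) h
      · exact BQaux.exists_of_eq4 (s := r2) (t := r4) (u := r1) (v := r3)
          (by rw [hQfact]; ring) h
      · exact BQaux.exists_of_eq4 (s := r3) (t := r4) (u := r1) (v := r2)
          (by rw [hQfact]; ring) h
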